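/- Let S be a finite set of points in the Euclidean plane in general position. Then the Voronoi poset of S is graded by cardinality: for every nonempty subset A ⊆ S with V(A) ≠ ∅, there exists a point a ∈ A such that V(A ∖ {a}) ≠ ∅. (Consequently every element of the Voronoi poset lies on a maximal chain descending to the empty set, with rank function the cardinality.) -/
import Mathlib


open scoped Classical

noncomputable section

/-- The Euclidean plane. -/
abbrev Plane := EuclideanSpace ℝ (Fin 2)

/-- General position: no three points of `S` are collinear and
no four points of `S` lie on a common circle. -/
def GenPos (S : Finset Plane) : Prop :=
  (∀ T ⊆ S, T.card = 3 → ¬ Collinear ℝ (T : Set Plane)) ∧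
  (∀ T ⊆ S, T.card = 4 → ¬ ∃ (o : Plane) (r : ℝ), ∀ p ∈ T, dist p o = r)

/-- The Voronoi region of `A ⊆ S`: points at least as close to every
point of `A` as to every point of `S \ A`. -/
def VorRegion (S A : Finset Plane) : Set Plane :=
  {p | ∀ x ∈ A, ∀ y ∈ S \ A, dist p x ≤ dist p y}

/-- `fVec S k` : the number of `k`-element subsets `A` of `S` with
nonempty Voronoi region, i.e. the number of regions of the `k`-th
order Voronoi diagram. -/
def fVec (S : Finset Plane) (k : ℕ) : ℕ :=
  ((S.powersetCard k).filter (fun A => (VorRegion S A).Nonempty)).card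

/-- `fInfVec S k` : the number of `k`-element subsets `A` of `S` whose
Voronoi region is nonempty and unbounded. -/
def fInfVec (S : Finset Plane) (k : ℕ) : ℕ :=
  ((S.powersetCard k).filter
    (fun A => (VorRegion S A).Nonempty ∧
      ¬ Bornology.IsBounded (VorRegion S A))).card

/-- `cVec S i` : the number of 3-element subsets `T` of `S` whose
circumscribed circle contains exactly `i` points of `S \ T` strictly
inside (`0` for `i < 0`). -/
def cVec (S : Finset Plane) (i : ℤ) : ℕ :=
  ((S.powersetCard 3).filter (fun T => ∃ (o : Plane) (r : ℝ),
    (∀ p ∈ T, dist p o = r) ∧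
    (((S \ T).filter (fun q => dist q o < r)).card : ℤ) = i)).card

/-- The Voronoi poset is graded: every nonempty element of the poset
covers an element one rank lower obtained by removing a suitable site. -/
theorem voronoi_poset_graded (S : Finset Plane) (hgp : GenPos S)
    (A : Finset Plane) (hA : A ⊆ S) (hAne : A.Nonempty)
    (hne : (VorRegion S A).Nonempty) :
    ∃ a ∈ A, (VorRegion S (A.erase a)).Nonempty := by
  obtain ⟨p, hp⟩ := hne
  obtain ⟨a, haA, hamax⟩ := A.exists_max_image (fun x => dist p x) hAne
  refine ⟨a, haA, p, ?_⟩
  intro x hx y hy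
  have hxA : x ∈ A := Finset.mem_of_mem_erase hx
  rcases Finset.mem_sdiff.mp hy with ⟨hyS, hyA⟩
  by_cases hya : y ∈ A
  · have : y = a := by
      by_contra h
      exact hyA (Finset.mem_erase.mpr ⟨h, hya⟩)
    subst this
    exact hamax x hxA
  · exact hp x hxA y (Finset.mem_sdiff.mpr ⟨hyS, hya⟩)
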